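/- Let ρ be a real number with 2/3 < ρ < 1. Then there exist constants C > 0 and ε₀ ∈ (0, 1) such that for every ε ∈ (0, ε₀), every x ∈ ℝ², every continuous O : ℝ → ℝ², and every t ∈ (0, ε^ρ]: (t/ε²) · ∫₀ᵗ ( ∫_{B(O(s), ε^ρ)} exp(−‖x−y‖²/(t−s)) dy ) / (t−s) ds ≤ C · ε^{3ρ−2} · log(1/ε), where B(z, r) denotes the open Euclidean ball of center z and radius r in ℝ² and the integrals are Lebesgue integrals. -/

import Mathlib

open MeasureTheory Real

private lemma aux_gauss_int (τ : ℝ) (hτ : 0 < τ) :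
    Integrable (fun v : EuclideanSpace ℝ (Fin 2) => rexp (-τ⁻¹ * ‖v‖ ^ 2)) := by
  have hb : (0:ℝ) < ((τ⁻¹ : ℝ) : ℂ).re := by simpa using inv_pos.mpr hτ
  have h := (GaussianFourier.integrable_cexp_neg_mul_sq_norm_add
    (V := EuclideanSpace ℝ (Fin 2)) hb 0 0).norm
  refine h.congr (Filter.Eventually.of_forall fun v => ?_)
  simp [Complex.norm_exp]
  left; norm_cast

private lemma aux_inner_le (x z : EuclideanSpace ℝ (Fin 2)) (r τ : ℝ) (hr : 0 < r) (hτ : 0 < τ) :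
    (∫ y in Metric.ball z r, rexp (-‖x - y‖ ^ 2 / τ)) ≤ min (π * r ^ 2) (π * τ) := by
  have hcont : Continuous fun y : EuclideanSpace ℝ (Fin 2) => rexp (-‖x - y‖ ^ 2 / τ) := by
    fun_prop
  have hrw : ∀ y : EuclideanSpace ℝ (Fin 2), rexp (-‖x - y‖ ^ 2 / τ)
      = rexp (-τ⁻¹ * ‖x - y‖ ^ 2) := by
    intro y; rw [neg_div, div_eq_inv_mul, neg_mul]
  refine le_min ?_ ?_
  · have h1 : ‖∫ y in Metric.ball z r, rexp (-‖x - y‖ ^ 2 / τ)‖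
        ≤ 1 * (volume (Metric.ball z r)).toReal := by
      refine norm_setIntegral_le_of_norm_le_const measure_ball_lt_top (fun y _ => ?_)
      rw [Real.norm_eq_abs, abs_of_pos (exp_pos _)]
      exact Real.exp_le_one_iff.mpr
        (div_nonpos_of_nonpos_of_nonneg (neg_nonpos.mpr (by positivity)) hτ.le)
    calc (∫ y in Metric.ball z r, rexp (-‖x - y‖ ^ 2 / τ))
        ≤ ‖∫ y in Metric.ball z r, rexp (-‖x - y‖ ^ 2 / τ)‖ := le_norm_self _
      _ ≤ 1 * (volume (Metric.ball z r)).toReal := h1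
      _ = π * r ^ 2 := by
          have hg : Real.Gamma 2 = 1 := by
            simpa using Real.Gamma_nat_eq_factorial 1
          rw [one_mul, EuclideanSpace.volume_ball]
          simp [ENNReal.toReal_mul, ENNReal.toReal_pow, ENNReal.toReal_ofReal hr.le,
            Real.sq_sqrt Real.pi_nonneg]
          rw [show (1+1:ℝ) = 2 by norm_num, hg]
          rw [div_one, ENNReal.toReal_ofReal Real.pi_nonneg]
          ring
  · simp_rw [hrw]
    have hint : Integrable (fun y : EuclideanSpace ℝ (Fin 2) => rexp (-τ⁻¹ * ‖x - y‖ ^ 2)) :=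
      (aux_gauss_int τ hτ).comp_sub_left x
    calc (∫ y in Metric.ball z r, rexp (-τ⁻¹ * ‖x - y‖ ^ 2))
        ≤ ∫ y : EuclideanSpace ℝ (Fin 2), rexp (-τ⁻¹ * ‖x - y‖ ^ 2) :=
          setIntegral_le_integral hint (Filter.Eventually.of_forall fun y => (exp_pos _).le)
      _ = ∫ v : EuclideanSpace ℝ (Fin 2), rexp (-τ⁻¹ * ‖v‖ ^ 2) :=
          integral_sub_left_eq_self (fun v => rexp (-τ⁻¹ * ‖v‖ ^ 2)) volume x
      _ = π * τ := by
          rw [GaussianFourier.integral_rexp_neg_mul_sq_norm (inv_pos.mpr hτ)]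
          simp [finrank_euclideanSpace_fin]

/-- Short-time estimate near the nodes: for `2/3 < ρ < 1` and `t ∈ (0, ε^ρ]`,
the time-weighted Duhamel contribution of the balls `B_{ε^ρ}(O(s))` is at most
`C ε^{3ρ-2} log(1/ε)`. -/
theorem stmt_10 (ρ : ℝ) (hρ : 2 / 3 < ρ) (hρ1 : ρ < 1) :
    ∃ C > (0:ℝ), ∃ ε₀ ∈ Set.Ioo (0:ℝ) 1, ∀ ε ∈ Set.Ioo (0:ℝ) ε₀,
      ∀ x : EuclideanSpace ℝ (Fin 2),
      ∀ O : ℝ → EuclideanSpace ℝ (Fin 2), Continuous O →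
      ∀ t ∈ Set.Ioc (0:ℝ) (ε ^ ρ),
        (t / ε ^ 2) *
          (∫ s in (0:ℝ)..t,
            (∫ y in Metric.ball (O s) (ε ^ ρ),
              Real.exp (-‖x - y‖ ^ 2 / (t - s))) / (t - s))
          ≤ C * ε ^ (3 * ρ - 2) * Real.log (1 / ε) := by
  have hρ0 : 0 < ρ := lt_trans (by norm_num) hρ
  refine ⟨2 * π, by positivity, Real.exp (-1), ⟨Real.exp_pos _, Real.exp_lt_one_iff.mpr (by norm_num)⟩,
    ?_⟩
  rintro ε ⟨hε0, hεlt⟩ x O hO t ⟨ht0, htle⟩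
  set r : ℝ := ε ^ ρ with hrdef
  have hε1 : ε < 1 := hεlt.trans (Real.exp_lt_one_iff.mpr (by norm_num))
  have hr0 : 0 < r := Real.rpow_pos_of_pos hε0 ρ
  set L : ℝ := Real.log (1 / ε) with hLdef
  have hL : L = -Real.log ε := by rw [hLdef, one_div, Real.log_inv]
  have hL1 : 1 ≤ L := by
    rw [hL, le_neg]
    have := Real.log_lt_log hε0 hεlt
    rw [Real.log_exp] at this
    exact this.le
  have hL0 : 0 ≤ L := le_trans zero_le_one hL1
  -- the dominating function
  set g : ℝ → ℝ := fun s => min (π * r ^ 2) (π * (t - s)) / (t - s) with hgdef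
  have hg_meas : Measurable g := by
    apply Measurable.div
    · exact (measurable_const.min (measurable_const.mul (measurable_const.sub measurable_id)))
    · exact measurable_const.sub measurable_id
  have hg_nonneg_le : ∀ s, 0 ≤ g s ∧ g s ≤ π := by
    intro s
    rcases lt_trichotomy s t with hst | hst | hst
    · have hτ : 0 < t - s := sub_pos.mpr hst
      constructor
      · exact div_nonneg (le_min (by positivity) (by positivity)) hτ.le
      · rw [div_le_iff₀ hτ]
        exact min_le_right _ _
    · simp [hgdef, hst, Real.pi_nonneg]
    · have hτ : t - s < 0 := sub_neg.mpr hst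
      have hmin : min (π * r ^ 2) (π * (t - s)) = π * (t - s) :=
        min_eq_right (le_trans (by nlinarith [Real.pi_pos]) (by positivity : (0:ℝ) ≤ π * r ^ 2))
      rw [hgdef]
      simp only
      rw [hmin, mul_div_assoc, div_self hτ.ne, mul_one]
      exact ⟨Real.pi_nonneg, le_refl _⟩
  have hg_bdd : ∀ s, ‖g s‖ ≤ π := fun s => by
    rw [Real.norm_eq_abs, abs_of_nonneg (hg_nonneg_le s).1]; exact (hg_nonneg_le s).2
  have hIntOn : ∀ a b : ℝ, IntegrableOn g (Set.Ioc a b) := by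
    intro a b
    refine Integrable.mono' (integrableOn_const measure_Ioc_lt_top.ne)
      hg_meas.aestronglyMeasurable.restrict (Filter.Eventually.of_forall hg_bdd)
  have hInt : ∀ a b : ℝ, a ≤ b → IntervalIntegrable g volume a b := fun a b hab =>
    (intervalIntegrable_iff_integrableOn_Ioc_of_le hab).mpr (hIntOn a b)
  -- Step 2: the interval integral is at most ∫ g over Ioo 0 t
  set f : ℝ → ℝ := fun s =>
    (∫ y in Metric.ball (O s) r, Real.exp (-‖x - y‖ ^ 2 / (t - s))) / (t - s) with hfdef
  have hI : (∫ s in (0:ℝ)..t, f s) ≤ ∫ s in Set.Ioo (0:ℝ) t, g s := by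
    rw [intervalIntegral.integral_of_le ht0.le, integral_Ioc_eq_integral_Ioo]
    refine integral_mono_of_nonneg ?_ ((hIntOn 0 t).mono_set Set.Ioo_subset_Ioc_self) ?_
    · refine (ae_restrict_iff' measurableSet_Ioo).mpr (Filter.Eventually.of_forall ?_)
      rintro s ⟨hs0, hst⟩
      exact div_nonneg
        (setIntegral_nonneg measurableSet_ball fun y _ => (exp_pos _).le)
        (sub_nonneg.mpr hst.le)
    · refine (ae_restrict_iff' measurableSet_Ioo).mpr (Filter.Eventually.of_forall ?_)
      rintro s ⟨hs0, hst⟩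
      have hτ : 0 < t - s := sub_pos.mpr hst
      have := aux_inner_le x (O s) r (t - s) hr0 hτ
      exact div_le_div_of_nonneg_right this hτ.le
  -- Step 3: bound ∫ g over Ioo 0 t
  have hJ : (∫ s in Set.Ioo (0:ℝ) t, g s) ≤ π * r ^ 2 * (1 + ρ * L) := by
    have hfac : (1:ℝ) ≤ 1 + ρ * L := le_add_of_nonneg_right (by positivity)
    by_cases hcase : t ≤ r ^ 2
    · -- small time: bound by π t ≤ π r²
      have h1 : ‖∫ s in Set.Ioo (0:ℝ) t, g s‖ ≤ π * (volume (Set.Ioo (0:ℝ) t)).toReal := by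
        refine norm_setIntegral_le_of_norm_le_const measure_Ioo_lt_top (fun s _ => hg_bdd s)
      have h2 : (volume (Set.Ioo (0:ℝ) t)).toReal = t := by
        rw [Real.volume_Ioo, ENNReal.toReal_ofReal (by linarith)]; ring
      calc (∫ s in Set.Ioo (0:ℝ) t, g s) ≤ ‖∫ s in Set.Ioo (0:ℝ) t, g s‖ := le_norm_self _
        _ ≤ π * (volume (Set.Ioo (0:ℝ) t)).toReal := h1
        _ = π * t := by rw [h2]
        _ ≤ π * r ^ 2 := by nlinarith [Real.pi_pos]
        _ ≤ π * r ^ 2 * (1 + ρ * L) := le_mul_of_one_le_right (by positivity) hfac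
    · push_neg at hcase
      have hsub0 : (0:ℝ) ≤ t - r ^ 2 := by linarith
      have heq : (∫ s in Set.Ioo (0:ℝ) t, g s) = ∫ s in (0:ℝ)..t, g s := by
        rw [intervalIntegral.integral_of_le ht0.le, integral_Ioc_eq_integral_Ioo]
      rw [heq, ← intervalIntegral.integral_add_adjacent_intervals
        (hInt 0 (t - r ^ 2) hsub0) (hInt (t - r ^ 2) t (by nlinarith [sq_nonneg r]))]
      have hpiece1 : (∫ s in (0:ℝ)..(t - r ^ 2), g s) = π * r ^ 2 * Real.log (t / r ^ 2) := by
        have hcg : ∀ s ∈ Set.uIcc (0:ℝ) (t - r ^ 2), g s = π * r ^ 2 * (t - s)⁻¹ := by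
          intro s hs
          rw [Set.uIcc_of_le hsub0] at hs
          have h1 : r ^ 2 ≤ t - s := by
            have := hs.2; linarith
          have hτ : 0 < t - s := lt_of_lt_of_le (by positivity) h1
          rw [hgdef]
          simp only
          rw [min_eq_left (by nlinarith [Real.pi_pos]), div_eq_mul_inv]
        rw [intervalIntegral.integral_congr hcg, intervalIntegral.integral_const_mul]
        congr 1
        have hcs := intervalIntegral.integral_comp_sub_left
          (a := (0:ℝ)) (b := t - r ^ 2) (fun u => u⁻¹) t
        rw [hcs, sub_sub_cancel, sub_zero]
        exact integral_inv (by
          rw [Set.uIcc_of_le hcase.le]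
          rintro ⟨h1, h2⟩
          nlinarith)
      have hpiece2 : (∫ s in (t - r ^ 2)..t, g s) ≤ π * r ^ 2 := by
        have := intervalIntegral.norm_integral_le_of_norm_le_const
          (a := t - r ^ 2) (b := t) (C := π) (f := g) (fun s _ => hg_bdd s)
        have habs : |t - (t - r ^ 2)| = r ^ 2 := by
          rw [sub_sub_cancel, abs_of_nonneg (by positivity)]
        rw [habs] at this
        calc (∫ s in (t - r ^ 2)..t, g s) ≤ ‖∫ s in (t - r ^ 2)..t, g s‖ := le_norm_self _
          _ ≤ π * r ^ 2 := this
      have hlog : Real.log (t / r ^ 2) ≤ ρ * L := by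
        have hstep : Real.log (t / r ^ 2) ≤ Real.log (r / r ^ 2) :=
          Real.log_le_log (by positivity) (div_le_div_of_nonneg_right htle (by positivity))
        have : r / r ^ 2 = r⁻¹ := by
          field_simp
        rw [this, Real.log_inv, hrdef, Real.log_rpow hε0] at hstep
        rw [hL]
        calc Real.log (t / r ^ 2) ≤ -(ρ * Real.log ε) := hstep
          _ = ρ * -Real.log ε := by ring
      calc (∫ s in (0:ℝ)..(t - r ^ 2), g s) + ∫ s in (t - r ^ 2)..t, g s
          ≤ π * r ^ 2 * (ρ * L) + π * r ^ 2 := by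
            rw [hpiece1]
            exact add_le_add (mul_le_mul_of_nonneg_left hlog (by positivity)) hpiece2
        _ = π * r ^ 2 * (1 + ρ * L) := by ring
  -- Step 4: assemble
  have hB0 : (0:ℝ) ≤ π * r ^ 2 * (1 + ρ * L) := by positivity
  have hchain : (t / ε ^ 2) * (∫ s in (0:ℝ)..t, f s)
      ≤ (r / ε ^ 2) * (π * r ^ 2 * (2 * L)) := by
    calc (t / ε ^ 2) * (∫ s in (0:ℝ)..t, f s)
        ≤ (t / ε ^ 2) * (π * r ^ 2 * (1 + ρ * L)) :=
          mul_le_mul_of_nonneg_left (hI.trans hJ) (div_nonneg ht0.le (by positivity))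
      _ ≤ (r / ε ^ 2) * (π * r ^ 2 * (1 + ρ * L)) :=
          mul_le_mul_of_nonneg_right (div_le_div_of_nonneg_right htle (by positivity)) hB0
      _ ≤ (r / ε ^ 2) * (π * r ^ 2 * (2 * L)) := by
          refine mul_le_mul_of_nonneg_left ?_ (div_nonneg hr0.le (by positivity))
          refine mul_le_mul_of_nonneg_left ?_ (by positivity)
          nlinarith
  have h3 : r * r ^ 2 = ε ^ (3 * ρ) := by
    rw [hrdef, ← Real.rpow_natCast (ε ^ ρ) 2, ← Real.rpow_mul hε0.le, ← Real.rpow_add hε0]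
    norm_num
    ring_nf
  have h4 : ε ^ (3 * ρ) / ε ^ 2 = ε ^ (3 * ρ - 2) := by
    rw [show (ε ^ 2 : ℝ) = ε ^ ((2:ℕ) : ℝ) by rw [Real.rpow_natCast],
      ← Real.rpow_sub hε0]
    norm_num
  have key : (r / ε ^ 2) * (π * r ^ 2 * (2 * L)) = 2 * π * ε ^ (3 * ρ - 2) * L := by
    rw [← h4, ← h3]; ring
  rw [← key]
  exact hchain
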